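/- Let β > 0 and x ∈ ℝ. Then there exists a unique θ̲ ∈ ℝ satisfying θ̲ = Φ(√β·(x − θ̲)), and this θ̲ lies in (0,1). Moreover, the critical partisan share α*(θ) := (θ − Φ(√β·(x − θ)))/(1 − Φ(√β·(x − θ))) satisfies α*(θ) > 0 if and only if θ > θ̲. -/
import Mathlib


open Real Set MeasureTheory

/-- The standard normal density `φ(t) = exp(−t²/2)/√(2π)`. -/
noncomputable def stdNormalPDF (t : ℝ) : ℝ :=
  Real.exp (-(t ^ 2) / 2) / Real.sqrt (2 * Real.pi)

/-- The standard normal cumulative distribution function `Φ`. -/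
noncomputable def stdNormalCDF (x : ℝ) : ℝ :=
  ∫ t in Set.Iic x, stdNormalPDF t

lemma pdf_pos (t : ℝ) : 0 < stdNormalPDF t := by
  unfold stdNormalPDF
  positivity

lemma pdf_eq : stdNormalPDF = fun t => Real.exp (-(1/2 : ℝ) * t ^ 2) / Real.sqrt (2 * Real.pi) := by
  funext t; unfold stdNormalPDF; ring_nf

lemma pdf_integrable : Integrable stdNormalPDF := by
  rw [pdf_eq]
  exact (integrable_exp_neg_mul_sq (by norm_num)).div_const _

lemma pdf_total : ∫ t, stdNormalPDF t = 1 := by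
  rw [pdf_eq]
  rw [integral_div, integral_gaussian]
  rw [div_eq_one_iff_eq (by positivity)]
  rw [show (π / (1/2 : ℝ)) = 2 * π by ring]

lemma cdf_pos (y : ℝ) : 0 < stdNormalCDF y := by
  rw [stdNormalCDF, setIntegral_pos_iff_support_of_nonneg_ae]
  · have : Function.support stdNormalPDF = Set.univ := by
      ext t; simp [(pdf_pos t).ne']
    rw [this, Set.univ_inter]
    simp [Real.volume_Iic]
  · exact Filter.Eventually.of_forall fun t => (pdf_pos t).le
  · exact pdf_integrable.integrableOn

lemma cdf_lt_one (y : ℝ) : stdNormalCDF y < 1 := by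
  have h := intervalIntegral.integral_Iic_add_Ioi (b := y) pdf_integrable.integrableOn pdf_integrable.integrableOn
  rw [pdf_total] at h
  have hpos : 0 < ∫ t in Set.Ioi y, stdNormalPDF t := by
    rw [setIntegral_pos_iff_support_of_nonneg_ae]
    · have : Function.support stdNormalPDF = Set.univ := by
        ext t; simp [(pdf_pos t).ne']
      rw [this, Set.univ_inter]
      simp [Real.volume_Ioi]
    · exact Filter.Eventually.of_forall fun t => (pdf_pos t).le
    · exact pdf_integrable.integrableOn
  rw [stdNormalCDF]; linarith

lemma cdf_mono : Monotone stdNormalCDF := fun a b hab => by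
  apply setIntegral_mono_set pdf_integrable.integrableOn
    (Filter.Eventually.of_forall fun t => (pdf_pos t).le)
  exact Filter.Eventually.of_forall (Set.Iic_subset_Iic.2 hab)

lemma cdf_cont : Continuous stdNormalCDF := by
  have h : ∀ y, stdNormalCDF y = (∫ t in (0:ℝ)..y, stdNormalPDF t) + stdNormalCDF 0 := by
    intro y
    have := intervalIntegral.integral_Iic_sub_Iic (a := (0:ℝ)) (b := y)
      pdf_integrable.integrableOn pdf_integrable.integrableOn
    rw [stdNormalCDF, stdNormalCDF]; linarith
  exact (((pdf_integrable.continuous_primitive 0)).add continuous_const).congr fun y => (h y).symm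

/-- For `β > 0` and `x ∈ ℝ` there is a unique `θ̲` with
`θ̲ = Φ(√β(x − θ̲))`, it lies in `(0,1)`, and the critical partisan share
`α*(θ) = (θ − Φ(√β(x − θ)))/(1 − Φ(√β(x − θ)))` is positive iff `θ > θ̲`. -/
theorem lower_collapse_threshold
    (β x : ℝ) (hβ : 0 < β) :
    ∃ tl : ℝ,
      tl = stdNormalCDF (Real.sqrt β * (x - tl)) ∧
      (∀ t : ℝ, t = stdNormalCDF (Real.sqrt β * (x - t)) → t = tl) ∧
      tl ∈ Set.Ioo (0 : ℝ) 1 ∧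
      (∀ θ : ℝ,
        0 < (θ - stdNormalCDF (Real.sqrt β * (x - θ))) /
            (1 - stdNormalCDF (Real.sqrt β * (x - θ))) ↔ tl < θ) := by
  set g : ℝ → ℝ := fun θ => θ - stdNormalCDF (Real.sqrt β * (x - θ)) with hg
  have hcont : Continuous g :=
    continuous_id.sub (cdf_cont.comp (continuous_const.mul (continuous_const.sub continuous_id)))
  have h0 : g 0 < 0 := by
    simp only [hg, zero_sub, sub_zero]
    linarith [cdf_pos (Real.sqrt β * x)]
  have h1 : 0 < g 1 := by
    simp only [hg]
    linarith [cdf_lt_one (Real.sqrt β * (x - 1))]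
  have hiv : (0 : ℝ) ∈ g '' Set.Ioo 0 1 :=
    intermediate_value_Ioo (by norm_num) hcont.continuousOn ⟨h0, h1⟩
  obtain ⟨tl, htl_mem, htl0⟩ := hiv
  have hfix : tl = stdNormalCDF (Real.sqrt β * (x - tl)) := by
    have : tl - stdNormalCDF (Real.sqrt β * (x - tl)) = 0 := htl0
    linarith
  -- key monotonicity: if a is a fixed point and a < b then g b > 0
  have hmono : ∀ a b : ℝ, a = stdNormalCDF (Real.sqrt β * (x - a)) → a < b →
      0 < b - stdNormalCDF (Real.sqrt β * (x - b)) := by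
    intro a b ha hab
    have hle : stdNormalCDF (Real.sqrt β * (x - b)) ≤ stdNormalCDF (Real.sqrt β * (x - a)) := by
      apply cdf_mono
      have hs : (0:ℝ) ≤ Real.sqrt β := Real.sqrt_nonneg β
      nlinarith
    linarith [ha ▸ hle]
  -- and if a is a fixed point and b ≤ a then g b ≤ 0
  have hmono' : ∀ a b : ℝ, a = stdNormalCDF (Real.sqrt β * (x - a)) → b ≤ a →
      b - stdNormalCDF (Real.sqrt β * (x - b)) ≤ 0 := by
    intro a b ha hab
    have hle : stdNormalCDF (Real.sqrt β * (x - a)) ≤ stdNormalCDF (Real.sqrt β * (x - b)) := by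
      apply cdf_mono
      have hs : (0:ℝ) ≤ Real.sqrt β := Real.sqrt_nonneg β
      nlinarith
    linarith [ha ▸ hle]
  refine ⟨tl, hfix, ?_, htl_mem, ?_⟩
  · intro t ht
    rcases lt_trichotomy t tl with h | h | h
    · have := hmono t tl ht h
      have h2 : tl - stdNormalCDF (Real.sqrt β * (x - tl)) = 0 := by linarith [hfix]
      linarith
    · exact h
    · have := hmono tl t hfix h
      have h2 : t - stdNormalCDF (Real.sqrt β * (x - t)) = 0 := by linarith [ht]
      linarith
  · intro θ
    have hden : 0 < 1 - stdNormalCDF (Real.sqrt β * (x - θ)) := by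
      linarith [cdf_lt_one (Real.sqrt β * (x - θ))]
    constructor
    · intro hpos
      by_contra hle
      push_neg at hle
      have := hmono' tl θ hfix hle
      have : (θ - stdNormalCDF (Real.sqrt β * (x - θ))) /
          (1 - stdNormalCDF (Real.sqrt β * (x - θ))) ≤ 0 :=
        div_nonpos_of_nonpos_of_nonneg this hden.le
      linarith
    · intro hlt
      exact div_pos (hmono tl θ hfix hlt) hden
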